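/- Let X be a coalgebra and s a left non-degenerate coalgebra endomorphism of X⊗X. Then the triple (X; ·, ⊥), with x·y := (id⊗ε)(G_s^{-1}(x⊗y)) and x⊥y := ^{(y·x_(1))}x_(2), is a left regular q-magma coalgebra; in particular the exchange identity y_(1)⊥x_(2) ⊗ x_(1)·y_(2) = y_(2)⊥x_(1) ⊗ x_(2)·y_(1) holds for all x,y ∈ X. -/

import Mathlib

open TensorProduct

noncomputable section

variable (k : Type) [Field k] (X : Type) [AddCommGroup X] [Module k X] [Coalgebra k X]

/-- x ⊗ y ↦ ε(y) x -/
def cE : X ⊗[k] X →ₗ[k] X :=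
  (TensorProduct.rid k X).toLinearMap ∘ₗ LinearMap.lTensor X (Coalgebra.counit (R := k))

/-- x ⊗ y ↦ ε(x) y -/
def cE' : X ⊗[k] X →ₗ[k] X :=
  (TensorProduct.lid k X).toLinearMap ∘ₗ LinearMap.rTensor X (Coalgebra.counit (R := k))

/-- first Sweedler component of a morphism `X⊗X → X⊗X` -/
def comp1 (s : X ⊗[k] X →ₗ[k] X ⊗[k] X) : X ⊗[k] X →ₗ[k] X := cE k X ∘ₗ s

/-- second Sweedler component of a morphism `X⊗X → X⊗X` -/
def comp2 (s : X ⊗[k] X →ₗ[k] X ⊗[k] X) : X ⊗[k] X →ₗ[k] X := cE' k X ∘ₗ s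

/-- `Gmap f (x ⊗ y) = f (x ⊗ y₍₁₎) ⊗ y₍₂₎` -/
def Gmap (f : X ⊗[k] X →ₗ[k] X) : X ⊗[k] X →ₗ[k] X ⊗[k] X :=
  TensorProduct.map f LinearMap.id ∘ₗ (TensorProduct.assoc k X X X).symm.toLinearMap ∘ₗ
    LinearMap.lTensor X (Coalgebra.comul (R := k))

/-- comultiplication of `X^cop` -/
def comulCop : X →ₗ[k] X ⊗[k] X :=
  (TensorProduct.comm k X X).toLinearMap ∘ₗ Coalgebra.comul (R := k)

/-- `GmapCop f (x ⊗ y) = f (x ⊗ y₍₂₎) ⊗ y₍₁₎` -/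
def GmapCop (f : X ⊗[k] X →ₗ[k] X) : X ⊗[k] X →ₗ[k] X ⊗[k] X :=
  TensorProduct.map f LinearMap.id ∘ₗ (TensorProduct.assoc k X X X).symm.toLinearMap ∘ₗ
    LinearMap.lTensor X (comulCop k X)

/-- comultiplication of `X ⊗ X` -/
def comulT : X ⊗[k] X →ₗ[k] (X ⊗[k] X) ⊗[k] (X ⊗[k] X) :=
  (TensorProduct.tensorTensorTensorComm k X X X X).toLinearMap ∘ₗ
    TensorProduct.map (Coalgebra.comul (R := k)) (Coalgebra.comul (R := k))

/-- comultiplication of `X ⊗ X^cop` -/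
def comulTCop : X ⊗[k] X →ₗ[k] (X ⊗[k] X) ⊗[k] (X ⊗[k] X) :=
  (TensorProduct.tensorTensorTensorComm k X X X X).toLinearMap ∘ₗ
    TensorProduct.map (Coalgebra.comul (R := k)) (comulCop k X)

/-- comultiplication of `X^cop ⊗ X^cop` -/
def comulTcc : X ⊗[k] X →ₗ[k] (X ⊗[k] X) ⊗[k] (X ⊗[k] X) :=
  (TensorProduct.tensorTensorTensorComm k X X X X).toLinearMap ∘ₗ
    TensorProduct.map (comulCop k X) (comulCop k X)

/-- counit of `X ⊗ X` -/
def counitT : X ⊗[k] X →ₗ[k] k :=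
  (TensorProduct.lid k k).toLinearMap ∘ₗ
    TensorProduct.map (Coalgebra.counit (R := k)) (Coalgebra.counit (R := k))

/-- `s : X⊗X → X⊗X` is a coalgebra morphism -/
def IsCoalgEndo (s : X ⊗[k] X →ₗ[k] X ⊗[k] X) : Prop :=
  comulT k X ∘ₗ s = TensorProduct.map s s ∘ₗ comulT k X ∧ counitT k X ∘ₗ s = counitT k X

/-- `f : X⊗X → X` is a coalgebra morphism -/
def IsCoalgMor (f : X ⊗[k] X →ₗ[k] X) : Prop :=
  Coalgebra.comul (R := k) ∘ₗ f = TensorProduct.map f f ∘ₗ comulT k X ∧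
  Coalgebra.counit (R := k) ∘ₗ f = counitT k X

/-- `f : X ⊗ X^cop → X` is a coalgebra morphism -/
def IsCoalgMorCop (f : X ⊗[k] X →ₗ[k] X) : Prop :=
  Coalgebra.comul (R := k) ∘ₗ f = TensorProduct.map f f ∘ₗ comulTCop k X ∧
  Coalgebra.counit (R := k) ∘ₗ f = counitT k X

/-- the operation `x ⊥ y := s₁ ((y·x₍₁₎) ⊗ x₍₂₎)` -/
def dOf (s : X ⊗[k] X →ₗ[k] X ⊗[k] X) (p : X ⊗[k] X →ₗ[k] X) : X ⊗[k] X →ₗ[k] X :=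
  comp1 k X s ∘ₗ Gmap k X p ∘ₗ (TensorProduct.comm k X X).toLinearMap

/-- the operation `⊥` of the endomorphism `s` viewed on `X^cop ⊗ X^cop` -/
def dOfCop (s : X ⊗[k] X →ₗ[k] X ⊗[k] X) (p : X ⊗[k] X →ₗ[k] X) : X ⊗[k] X →ₗ[k] X :=
  comp1 k X s ∘ₗ GmapCop k X p ∘ₗ (TensorProduct.comm k X X).toLinearMap

/-- left non-degeneracy of `s` : `G_s` is invertible -/
def LeftNonDeg (s : X ⊗[k] X →ₗ[k] X ⊗[k] X) : Prop :=
  Function.Bijective (Gmap k X (comp2 k X s))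

/-- `p` is the operation `·` associated with a left non-degenerate `s`, i.e.
`(x·y₍₁₎)^(y₍₂₎) = x^(y₍₁₎)·y₍₂₎ = ε(y)x`. -/
def IsDotOf (s : X ⊗[k] X →ₗ[k] X ⊗[k] X) (p : X ⊗[k] X →ₗ[k] X) : Prop :=
  comp2 k X s ∘ₗ Gmap k X p = cE k X ∧ p ∘ₗ Gmap k X (comp2 k X s) = cE k X

def s12m (s : X ⊗[k] X →ₗ[k] X ⊗[k] X) : (X ⊗[k] X) ⊗[k] X →ₗ[k] (X ⊗[k] X) ⊗[k] X :=
  LinearMap.rTensor X s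

def s23m (s : X ⊗[k] X →ₗ[k] X ⊗[k] X) : (X ⊗[k] X) ⊗[k] X →ₗ[k] (X ⊗[k] X) ⊗[k] X :=
  (TensorProduct.assoc k X X X).symm.toLinearMap ∘ₗ LinearMap.lTensor X s ∘ₗ
    (TensorProduct.assoc k X X X).toLinearMap

/-- the braid equation -/
def IsBraidSol (s : X ⊗[k] X →ₗ[k] X ⊗[k] X) : Prop :=
  s12m k X s ∘ₗ s23m k X s ∘ₗ s12m k X s = s23m k X s ∘ₗ s12m k X s ∘ₗ s23m k X s

/-- the exchange identity `y₍₁₎⊥x₍₂₎ ⊗ x₍₁₎·y₍₂₎ = y₍₂₎⊥x₍₁₎ ⊗ x₍₂₎·y₍₁₎` -/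
def ExchangeId (p d : X ⊗[k] X →ₗ[k] X) : Prop :=
  ∀ (x y : X) (n m : ℕ) (x1 x2 : Fin n → X) (y1 y2 : Fin m → X),
    (∑ i, x1 i ⊗ₜ[k] x2 i) = Coalgebra.comul (R := k) x →
    (∑ j, y1 j ⊗ₜ[k] y2 j) = Coalgebra.comul (R := k) y →
    (∑ i, ∑ j, d (y1 j ⊗ₜ[k] x2 i) ⊗ₜ[k] p (x1 i ⊗ₜ[k] y2 j)) =
      ∑ i, ∑ j, d (y2 j ⊗ₜ[k] x1 i) ⊗ₜ[k] p (x2 i ⊗ₜ[k] y1 j)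

/-- the three q-cycle coalgebra conditions -/
def QCycleConds (p d : X ⊗[k] X →ₗ[k] X) : Prop :=
  ∀ (x y z : X) (n m : ℕ) (y1 y2 : Fin n → X) (z1 z2 : Fin m → X),
    (∑ i, y1 i ⊗ₜ[k] y2 i) = Coalgebra.comul (R := k) y →
    (∑ j, z1 j ⊗ₜ[k] z2 j) = Coalgebra.comul (R := k) z →
    ((∑ i, p (p (x ⊗ₜ[k] y1 i) ⊗ₜ[k] d (z ⊗ₜ[k] y2 i))) =
        ∑ j, p (p (x ⊗ₜ[k] z2 j) ⊗ₜ[k] p (y ⊗ₜ[k] z1 j)) ∧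
     (∑ i, d (p (x ⊗ₜ[k] y1 i) ⊗ₜ[k] p (z ⊗ₜ[k] y2 i))) =
        ∑ j, p (d (x ⊗ₜ[k] z2 j) ⊗ₜ[k] d (y ⊗ₜ[k] z1 j)) ∧
     (∑ i, d (d (x ⊗ₜ[k] y1 i) ⊗ₜ[k] d (z ⊗ₜ[k] y2 i))) =
        ∑ j, d (d (x ⊗ₜ[k] z2 j) ⊗ₜ[k] p (y ⊗ₜ[k] z1 j)))


/-- the left action `ˣy := y₍₂₎ ⊥ x^(y₍₁₎)`, where `g` is the operation `x^y` -/
def bOf (g d : X ⊗[k] X →ₗ[k] X) : X ⊗[k] X →ₗ[k] X :=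
  d ∘ₗ (TensorProduct.comm k X X).toLinearMap ∘ₗ Gmap k X g

/-- the left action `_xy := y₍₁₎ · x_(y₍₂₎)`, where `g'` is the operation `x_y` -/
def uOfCop (g' p : X ⊗[k] X →ₗ[k] X) : X ⊗[k] X →ₗ[k] X :=
  p ∘ₗ (TensorProduct.comm k X X).toLinearMap ∘ₗ GmapCop k X g'

/-- `Hmap f (x ⊗ y) = f (y₍₂₎ ⊗ x) ⊗ y₍₁₎` -/
def Hmap (f : X ⊗[k] X →ₗ[k] X) : X ⊗[k] X →ₗ[k] X ⊗[k] X :=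
  TensorProduct.map f LinearMap.id ∘ₗ (TensorProduct.assoc k X X X).symm.toLinearMap ∘ₗ
    LinearMap.lTensor X (TensorProduct.comm k X X).toLinearMap ∘ₗ
    (TensorProduct.assoc k X X X).toLinearMap ∘ₗ
    LinearMap.rTensor X (comulCop k X) ∘ₗ (TensorProduct.comm k X X).toLinearMap

/-- `HmapCop f (x ⊗ y) = f (y₍₁₎ ⊗ x) ⊗ y₍₂₎` -/
def HmapCop (f : X ⊗[k] X →ₗ[k] X) : X ⊗[k] X →ₗ[k] X ⊗[k] X :=
  TensorProduct.map f LinearMap.id ∘ₗ (TensorProduct.assoc k X X X).symm.toLinearMap ∘ₗ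
    LinearMap.lTensor X (TensorProduct.comm k X X).toLinearMap ∘ₗ
    (TensorProduct.assoc k X X X).toLinearMap ∘ₗ
    LinearMap.rTensor X (Coalgebra.comul (R := k)) ∘ₗ (TensorProduct.comm k X X).toLinearMap

/-! ### kernel -/

def eG {M M' : Type} [AddCommGroup M] [Module k M] [AddCommGroup M'] [Module k M']
    (h : M ⊗[k] X →ₗ[k] M') : M ⊗[k] X →ₗ[k] M' ⊗[k] X :=
  TensorProduct.map h LinearMap.id ∘ₗ (TensorProduct.assoc k M X X).symm.toLinearMap ∘ₗ
    LinearMap.lTensor M (Coalgebra.comul (R := k))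

def sw (A B C : Type) [AddCommGroup A] [Module k A] [AddCommGroup B] [Module k B]
    [AddCommGroup C] [Module k C] : (A ⊗[k] B) ⊗[k] C →ₗ[k] (A ⊗[k] C) ⊗[k] B :=
  (TensorProduct.assoc k A C B).symm.toLinearMap ∘ₗ
    LinearMap.lTensor A (TensorProduct.comm k B C).toLinearMap ∘ₗ
    (TensorProduct.assoc k A B C).toLinearMap

@[simp] lemma eG_tmul {M M' : Type} [AddCommGroup M] [Module k M] [AddCommGroup M'] [Module k M']
    (h : M ⊗[k] X →ₗ[k] M') (m : M) (y : X) :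
    eG k X h (m ⊗ₜ[k] y) = (TensorProduct.map h LinearMap.id)
      ((TensorProduct.assoc k M X X).symm (m ⊗ₜ[k] (Coalgebra.comul (R := k) y))) := by
  simp [eG]

@[simp] lemma sw_tmul {A B C : Type} [AddCommGroup A] [Module k A] [AddCommGroup B] [Module k B]
    [AddCommGroup C] [Module k C] (a : A) (b : B) (c : C) :
    sw k A B C ((a ⊗ₜ[k] b) ⊗ₜ[k] c) = (a ⊗ₜ[k] c) ⊗ₜ[k] b := by
  simp [sw]

@[simp] lemma cE_tmul (x y : X) :
    cE k X (x ⊗ₜ[k] y) = Coalgebra.counit (R := k) y • x := by simp [cE]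

@[simp] lemma cE'_tmul (x y : X) :
    cE' k X (x ⊗ₜ[k] y) = Coalgebra.counit (R := k) x • y := by simp [cE']

lemma rT_eG {M M' N : Type} [AddCommGroup M] [Module k M] [AddCommGroup M'] [Module k M']
    [AddCommGroup N] [Module k N] (h : M ⊗[k] X →ₗ[k] M') (u : M' →ₗ[k] N) :
    LinearMap.rTensor X u ∘ₗ eG k X h = eG k X (u ∘ₗ h) := by
  ext m y
  simp only [LinearMap.coe_comp, Function.comp_apply, AlgebraTensorModule.curry_apply,
    curry_apply, LinearMap.coe_restrictScalars, eG_tmul]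
  generalize Coalgebra.comul (R := k) y = t
  induction t using TensorProduct.induction_on with
  | zero => simp
  | tmul a b => simp
  | add u v hu hv => simp only [tmul_add, add_tmul, map_add, hu, hv]

lemma eG_rT {M M' N : Type} [AddCommGroup M] [Module k M] [AddCommGroup M'] [Module k M']
    [AddCommGroup N] [Module k N] (h : M ⊗[k] X →ₗ[k] M') (w : N →ₗ[k] M) :
    eG k X h ∘ₗ LinearMap.rTensor X w = eG k X (h ∘ₗ LinearMap.rTensor X w) := by
  ext m y
  simp only [LinearMap.coe_comp, Function.comp_apply, AlgebraTensorModule.curry_apply,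
    curry_apply, LinearMap.coe_restrictScalars, LinearMap.rTensor_tmul, eG_tmul]
  generalize Coalgebra.comul (R := k) y = t
  induction t using TensorProduct.induction_on with
  | zero => simp
  | tmul a b => simp
  | add u v hu hv => simp only [tmul_add, add_tmul, map_add, hu, hv]

/-- the key coassociativity law -/
lemma eG_eG {M M' M'' : Type} [AddCommGroup M] [Module k M] [AddCommGroup M'] [Module k M']
    [AddCommGroup M''] [Module k M''] (h : M ⊗[k] X →ₗ[k] M') (h' : M' ⊗[k] X →ₗ[k] M'') :
    eG k X h' ∘ₗ eG k X h = eG k X (h' ∘ₗ eG k X h) := by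
  have A1 : eG k X h' ∘ₗ eG k X h =
      (TensorProduct.map h' LinearMap.id ∘ₗ (TensorProduct.assoc k M' X X).symm.toLinearMap ∘ₗ
        TensorProduct.map h (LinearMap.id (M := X ⊗[k] X)) ∘ₗ
        (TensorProduct.assoc k M X (X ⊗[k] X)).symm.toLinearMap) ∘ₗ
      LinearMap.lTensor M (LinearMap.lTensor X (Coalgebra.comul (R := k)) ∘ₗ
        Coalgebra.comul (R := k)) := by
    ext m y
    simp only [LinearMap.coe_comp, Function.comp_apply, AlgebraTensorModule.curry_apply,
      curry_apply, LinearMap.coe_restrictScalars, eG_tmul, LinearMap.lTensor_tmul]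
    generalize Coalgebra.comul (R := k) y = t
    induction t using TensorProduct.induction_on with
    | zero => simp
    | tmul a b =>
      simp only [assoc_symm_tmul, map_tmul, LinearMap.id_coe, id_eq, eG_tmul,
        LinearMap.lTensor_tmul]
      generalize Coalgebra.comul (R := k) b = u
      induction u using TensorProduct.induction_on with
      | zero => simp
      | tmul c d => simp
      | add u v hu hv => simp only [tmul_add, add_tmul, map_add, hu, hv]
    | add u v hu hv => simp only [tmul_add, add_tmul, map_add, hu, hv]
  have A2 : eG k X (h' ∘ₗ eG k X h) =
      (TensorProduct.map h' LinearMap.id ∘ₗ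
        TensorProduct.map (TensorProduct.map h (LinearMap.id (M := X))) (LinearMap.id (M := X)) ∘ₗ
        TensorProduct.map ((TensorProduct.assoc k M X X).symm.toLinearMap) (LinearMap.id (M := X)) ∘ₗ
        (TensorProduct.assoc k M (X ⊗[k] X) X).symm.toLinearMap) ∘ₗ
      LinearMap.lTensor M (LinearMap.rTensor X (Coalgebra.comul (R := k)) ∘ₗ
        Coalgebra.comul (R := k)) := by
    ext m y
    simp only [LinearMap.coe_comp, Function.comp_apply, AlgebraTensorModule.curry_apply,
      curry_apply, LinearMap.coe_restrictScalars, eG_tmul, LinearMap.lTensor_tmul]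
    generalize Coalgebra.comul (R := k) y = t
    induction t using TensorProduct.induction_on with
    | zero => simp
    | tmul a b =>
      simp only [assoc_symm_tmul, map_tmul, LinearMap.id_coe, id_eq, eG_tmul,
        LinearMap.rTensor_tmul, LinearMap.coe_comp, Function.comp_apply]
      generalize Coalgebra.comul (R := k) a = u
      induction u using TensorProduct.induction_on with
      | zero => simp
      | tmul c d => simp
      | add u v hu hv => simp only [tmul_add, add_tmul, map_add, hu, hv]
    | add u v hu hv => simp only [tmul_add, add_tmul, map_add, hu, hv]
  have co : LinearMap.lTensor X (Coalgebra.comul (R := k)) ∘ₗ Coalgebra.comul (R := k) =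
      (TensorProduct.assoc k X X X).toLinearMap ∘ₗ
        LinearMap.rTensor X (Coalgebra.comul (R := k)) ∘ₗ Coalgebra.comul (R := k) :=
    Coalgebra.coassoc.symm
  have fin : (TensorProduct.map h' LinearMap.id ∘ₗ (TensorProduct.assoc k M' X X).symm.toLinearMap ∘ₗ
        TensorProduct.map h (LinearMap.id (M := X ⊗[k] X)) ∘ₗ
        (TensorProduct.assoc k M X (X ⊗[k] X)).symm.toLinearMap) ∘ₗ
        LinearMap.lTensor M (TensorProduct.assoc k X X X).toLinearMap =
      (TensorProduct.map h' LinearMap.id ∘ₗ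
        TensorProduct.map (TensorProduct.map h (LinearMap.id (M := X))) (LinearMap.id (M := X)) ∘ₗ
        TensorProduct.map ((TensorProduct.assoc k M X X).symm.toLinearMap) (LinearMap.id (M := X)) ∘ₗ
        (TensorProduct.assoc k M (X ⊗[k] X) X).symm.toLinearMap) := by
    ext m y z w
    simp
  rw [A1, A2, co, LinearMap.lTensor_comp, ← fin]
  simp only [LinearMap.comp_assoc]

/-- counit collapse from the left: `cE ∘ eG h = h` -/
lemma cE_eG {M : Type} [AddCommGroup M] [Module k M] (h : M ⊗[k] X →ₗ[k] X) :
    cE k X ∘ₗ eG k X h = h := by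
  have e1 : cE k X ∘ₗ eG k X h = h ∘ₗ LinearMap.lTensor M
      ((TensorProduct.rid k X).toLinearMap ∘ₗ
        LinearMap.lTensor X (Coalgebra.counit (R := k)) ∘ₗ Coalgebra.comul (R := k)) := by
    ext m y
    simp only [LinearMap.coe_comp, Function.comp_apply, AlgebraTensorModule.curry_apply,
      curry_apply, LinearMap.coe_restrictScalars, eG_tmul, LinearMap.lTensor_tmul]
    generalize Coalgebra.comul (R := k) y = t
    induction t using TensorProduct.induction_on with
    | zero => simp
    | tmul a b => simp [tmul_smul]
    | add u v hu hv => simp only [tmul_add, add_tmul, map_add, hu, hv]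
  rw [e1, Coalgebra.lTensor_counit_comp_comul]
  have h2 : (TensorProduct.rid k X).toLinearMap ∘ₗ (TensorProduct.mk k X k).flip 1 =
      LinearMap.id := by ext x; simp
  rw [h2, LinearMap.lTensor_id, LinearMap.comp_id]

/-- `eG cE = id` -/
lemma eG_cE : eG k X (cE k X) = LinearMap.id := by
  have e1 : eG k X (cE k X) =
      (LinearMap.rTensor X (TensorProduct.rid k X).toLinearMap ∘ₗ
        (TensorProduct.assoc k X k X).symm.toLinearMap) ∘ₗ
      LinearMap.lTensor X (LinearMap.rTensor X (Coalgebra.counit (R := k)) ∘ₗ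
        Coalgebra.comul (R := k)) := by
    ext x y
    simp only [LinearMap.coe_comp, Function.comp_apply, AlgebraTensorModule.curry_apply,
      curry_apply, LinearMap.coe_restrictScalars, eG_tmul, LinearMap.lTensor_tmul]
    generalize Coalgebra.comul (R := k) y = t
    induction t using TensorProduct.induction_on with
    | zero => simp
    | tmul a b => simp [smul_tmul]
    | add u v hu hv => simp only [tmul_add, add_tmul, map_add, hu, hv]
  rw [e1, Coalgebra.rTensor_counit_comp_comul]
  ext x y
  simp

/-- tail counit collapse : `(cE ⊗ id) ∘ sw ∘ eG W = W` -/
lemma tail_eG {M N : Type} [AddCommGroup M] [Module k M] [AddCommGroup N] [Module k N]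
    (W : M ⊗[k] X →ₗ[k] X ⊗[k] N) :
    TensorProduct.map (cE k X) (LinearMap.id (M := N)) ∘ₗ sw k X N X ∘ₗ eG k X W = W := by
  have e1 : TensorProduct.map (cE k X) (LinearMap.id (M := N)) ∘ₗ sw k X N X ∘ₗ eG k X W =
      W ∘ₗ LinearMap.lTensor M
      ((TensorProduct.rid k X).toLinearMap ∘ₗ
        LinearMap.lTensor X (Coalgebra.counit (R := k)) ∘ₗ Coalgebra.comul (R := k)) := by
    ext m y
    simp only [LinearMap.coe_comp, Function.comp_apply, AlgebraTensorModule.curry_apply,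
      curry_apply, LinearMap.coe_restrictScalars, eG_tmul, LinearMap.lTensor_tmul]
    generalize Coalgebra.comul (R := k) y = t
    induction t using TensorProduct.induction_on with
    | zero => simp
    | tmul a b =>
      simp only [assoc_symm_tmul, map_tmul, LinearMap.id_coe, id_eq, LinearMap.lTensor_tmul,
        LinearEquiv.coe_coe, rid_tmul, tmul_smul, map_smul]
      generalize W (m ⊗ₜ[k] a) = w
      induction w using TensorProduct.induction_on with
      | zero => simp
      | tmul c n => simp [smul_tmul']
      | add u v hu hv => simp only [add_tmul, map_add, hu, hv, smul_add]
    | add u v hu hv => simp only [tmul_add, add_tmul, map_add, hu, hv]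
  rw [e1, Coalgebra.lTensor_counit_comp_comul]
  have h2 : (TensorProduct.rid k X).toLinearMap ∘ₗ (TensorProduct.mk k X k).flip 1 =
      LinearMap.id := by ext x; simp
  rw [h2, LinearMap.lTensor_id, LinearMap.comp_id]

/-- EL : serializing a level with left spectator -/
lemma eG_lT {Z A A' : Type} [AddCommGroup Z] [Module k Z] [AddCommGroup A] [Module k A]
    [AddCommGroup A'] [Module k A'] (w : A ⊗[k] X →ₗ[k] A') :
    eG k X (LinearMap.lTensor Z w ∘ₗ (TensorProduct.assoc k Z A X).toLinearMap) =
      (TensorProduct.assoc k Z A' X).symm.toLinearMap ∘ₗ LinearMap.lTensor Z (eG k X w) ∘ₗ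
        (TensorProduct.assoc k Z A X).toLinearMap := by
  ext z a y
  simp only [LinearMap.coe_comp, Function.comp_apply, AlgebraTensorModule.curry_apply,
    curry_apply, LinearMap.coe_restrictScalars, eG_tmul, LinearEquiv.coe_coe, assoc_tmul,
    LinearMap.lTensor_tmul]
  generalize Coalgebra.comul (R := k) y = t
  induction t using TensorProduct.induction_on with
  | zero => simp
  | tmul a b => simp
  | add u v hu hv => simp only [tmul_add, add_tmul, map_add, hu, hv]

/-- ER : serializing a level with right spectator -/
lemma eG_sw {A A' B : Type} [AddCommGroup A] [Module k A] [AddCommGroup A'] [Module k A']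
    [AddCommGroup B] [Module k B] (w : A ⊗[k] X →ₗ[k] A') :
    eG k X (TensorProduct.map w (LinearMap.id (M := B)) ∘ₗ sw k A B X) =
      sw k A' X B ∘ₗ LinearMap.rTensor B (eG k X w) ∘ₗ sw k A B X := by
  ext a b y
  simp only [LinearMap.coe_comp, Function.comp_apply, AlgebraTensorModule.curry_apply,
    curry_apply, LinearMap.coe_restrictScalars, eG_tmul, sw_tmul, LinearMap.rTensor_tmul]
  generalize Coalgebra.comul (R := k) y = t
  induction t using TensorProduct.induction_on with
  | zero => simp
  | tmul a b => simp
  | add u v hu hv => simp only [tmul_add, add_tmul, map_add, hu, hv]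

lemma sw_sw {A B C : Type} [AddCommGroup A] [Module k A] [AddCommGroup B] [Module k B]
    [AddCommGroup C] [Module k C] :
    sw k A C B ∘ₗ sw k A B C = LinearMap.id := by
  ext a b c; simp
/-! ### level maps -/

def rS : X ⊗[k] X →ₗ[k] (X ⊗[k] X) ⊗[k] X := LinearMap.rTensor X (Coalgebra.comul (R := k))

def hA (q : X ⊗[k] X →ₗ[k] X) : (X ⊗[k] X) ⊗[k] X →ₗ[k] X ⊗[k] X :=
  LinearMap.lTensor X q ∘ₗ (TensorProduct.assoc k X X X).toLinearMap

def hB (q : X ⊗[k] X →ₗ[k] X) : (X ⊗[k] X) ⊗[k] X →ₗ[k] X ⊗[k] X :=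
  TensorProduct.map q LinearMap.id ∘ₗ sw k X X X

def jC (q : X ⊗[k] X →ₗ[k] X) : (X ⊗[k] X) ⊗[k] X →ₗ[k] X ⊗[k] X :=
  (TensorProduct.comm k X X).toLinearMap ∘ₗ hB k X q

def comulCT : X ⊗[k] X →ₗ[k] (X ⊗[k] X) ⊗[k] (X ⊗[k] X) :=
  (TensorProduct.tensorTensorTensorComm k X X X X).toLinearMap ∘ₗ
    TensorProduct.map (comulCop k X) (Coalgebra.comul (R := k))

@[simp] lemma rS_tmul (x y : X) :
    rS k X (x ⊗ₜ[k] y) = (Coalgebra.comul (R := k) x) ⊗ₜ[k] y := rfl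

@[simp] lemma hA_tmul (q : X ⊗[k] X →ₗ[k] X) (a b c : X) :
    hA k X q ((a ⊗ₜ[k] b) ⊗ₜ[k] c) = a ⊗ₜ[k] q (b ⊗ₜ[k] c) := by simp [hA]

@[simp] lemma hB_tmul (q : X ⊗[k] X →ₗ[k] X) (a b c : X) :
    hB k X q ((a ⊗ₜ[k] b) ⊗ₜ[k] c) = q (a ⊗ₜ[k] c) ⊗ₜ[k] b := by simp [hB]

@[simp] lemma jC_tmul (q : X ⊗[k] X →ₗ[k] X) (a b c : X) :
    jC k X q ((a ⊗ₜ[k] b) ⊗ₜ[k] c) = b ⊗ₜ[k] q (a ⊗ₜ[k] c) := by simp [jC]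

@[simp] lemma comulT_tmul (x y : X) :
    comulT k X (x ⊗ₜ[k] y) = (TensorProduct.tensorTensorTensorComm k X X X X)
      ((Coalgebra.comul (R := k) x) ⊗ₜ[k] (Coalgebra.comul (R := k) y)) := by simp [comulT]

@[simp] lemma comulTcc_tmul (x y : X) :
    comulTcc k X (x ⊗ₜ[k] y) = (TensorProduct.tensorTensorTensorComm k X X X X)
      ((comulCop k X x) ⊗ₜ[k] (comulCop k X y)) := by simp [comulTcc]

@[simp] lemma comulTCop_tmul (x y : X) :
    comulTCop k X (x ⊗ₜ[k] y) = (TensorProduct.tensorTensorTensorComm k X X X X)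
      ((Coalgebra.comul (R := k) x) ⊗ₜ[k] (comulCop k X y)) := by simp [comulTCop]

@[simp] lemma comulCT_tmul (x y : X) :
    comulCT k X (x ⊗ₜ[k] y) = (TensorProduct.tensorTensorTensorComm k X X X X)
      ((comulCop k X x) ⊗ₜ[k] (Coalgebra.comul (R := k) y)) := by simp [comulCT]

lemma comm_comm : (TensorProduct.comm k X X).toLinearMap ∘ₗ
    (TensorProduct.comm k X X).toLinearMap = LinearMap.id := by
  ext x y; simp

/-! ### serial (opaque) lemmas -/

lemma serial1 (q r : X ⊗[k] X →ₗ[k] X) :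
    hA k X r ∘ₗ eG k X (hB k X q ∘ₗ rS k X) = TensorProduct.map q r ∘ₗ comulT k X := by
  ext x y
  simp only [LinearMap.coe_comp, Function.comp_apply, AlgebraTensorModule.curry_apply,
    curry_apply, LinearMap.coe_restrictScalars, eG_tmul, comulT_tmul, LinearEquiv.coe_coe]
  generalize Coalgebra.comul (R := k) y = t
  induction t using TensorProduct.induction_on with
  | zero => simp
  | add t1 t2 h1 h2 => simp only [tmul_add, add_tmul, map_add, h1, h2]
  | tmul c e =>
    simp only [assoc_symm_tmul, map_tmul, LinearMap.id_coe, id_eq, LinearMap.coe_comp,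
      Function.comp_apply, rS_tmul, TensorProduct.comm_tmul, LinearEquiv.coe_coe]
    generalize Coalgebra.comul (R := k) x = u
    induction u using TensorProduct.induction_on with
    | zero => simp
    | tmul a b => simp
    | add u1 u2 h1 h2 => simp only [tmul_add, add_tmul, map_add, h1, h2]

lemma serial2 (q r : X ⊗[k] X →ₗ[k] X) :
    hB k X r ∘ₗ eG k X (jC k X q ∘ₗ rS k X) = TensorProduct.map r q ∘ₗ comulTcc k X := by
  ext x y
  simp only [LinearMap.coe_comp, Function.comp_apply, AlgebraTensorModule.curry_apply,
    curry_apply, LinearMap.coe_restrictScalars, eG_tmul, comulTcc_tmul, LinearEquiv.coe_coe,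
    comulCop, TensorProduct.comm_tmul]
  generalize Coalgebra.comul (R := k) y = t
  induction t using TensorProduct.induction_on with
  | zero => simp
  | add t1 t2 h1 h2 => simp only [tmul_add, add_tmul, map_add, h1, h2]
  | tmul c e =>
    simp only [assoc_symm_tmul, map_tmul, LinearMap.id_coe, id_eq, LinearMap.coe_comp,
      Function.comp_apply, rS_tmul, TensorProduct.comm_tmul, LinearEquiv.coe_coe]
    generalize Coalgebra.comul (R := k) x = u
    induction u using TensorProduct.induction_on with
    | zero => simp
    | tmul a b => simp
    | add u1 u2 h1 h2 => simp only [tmul_add, add_tmul, map_add, h1, h2]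

lemma serial3 (q r : X ⊗[k] X →ₗ[k] X) :
    (TensorProduct.comm k X X).toLinearMap ∘ₗ hB k X r ∘ₗ eG k X (jC k X q ∘ₗ rS k X) =
      TensorProduct.map q r ∘ₗ comulT k X := by
  ext x y
  simp only [LinearMap.coe_comp, Function.comp_apply, AlgebraTensorModule.curry_apply,
    curry_apply, LinearMap.coe_restrictScalars, eG_tmul, comulT_tmul, LinearEquiv.coe_coe]
  generalize Coalgebra.comul (R := k) y = t
  induction t using TensorProduct.induction_on with
  | zero => simp
  | add t1 t2 h1 h2 => simp only [tmul_add, add_tmul, map_add, h1, h2]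
  | tmul c e =>
    simp only [assoc_symm_tmul, map_tmul, LinearMap.id_coe, id_eq, LinearMap.coe_comp,
      Function.comp_apply, rS_tmul, TensorProduct.comm_tmul, LinearEquiv.coe_coe]
    generalize Coalgebra.comul (R := k) x = u
    induction u using TensorProduct.induction_on with
    | zero => simp
    | tmul a b => simp
    | add u1 u2 h1 h2 => simp only [tmul_add, add_tmul, map_add, h1, h2]

lemma comulTCop_serial :
    comulTCop k X = (TensorProduct.tensorTensorTensorComm k X X X X).toLinearMap ∘ₗ
      LinearMap.lTensor (X ⊗[k] X) (TensorProduct.comm k X X).toLinearMap ∘ₗ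
      (TensorProduct.assoc k (X ⊗[k] X) X X).toLinearMap ∘ₗ eG k X (rS k X) := by
  ext x y
  simp only [LinearMap.coe_comp, Function.comp_apply, AlgebraTensorModule.curry_apply,
    curry_apply, LinearMap.coe_restrictScalars, eG_tmul, comulTCop_tmul, LinearEquiv.coe_coe,
    comulCop, TensorProduct.comm_tmul]
  generalize Coalgebra.comul (R := k) y = t
  induction t using TensorProduct.induction_on with
  | zero => simp
  | add t1 t2 h1 h2 => simp only [tmul_add, add_tmul, map_add, h1, h2]
  | tmul c e =>
    simp only [assoc_symm_tmul, map_tmul, LinearMap.id_coe, id_eq, LinearMap.coe_comp,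
      Function.comp_apply, rS_tmul, TensorProduct.comm_tmul, LinearEquiv.coe_coe]
    generalize Coalgebra.comul (R := k) x = u
    induction u using TensorProduct.induction_on with
    | zero => simp
    | tmul a b => simp
    | add u1 u2 h1 h2 => simp only [tmul_add, add_tmul, map_add, h1, h2]

lemma comulCT_serial :
    comulCT k X = (TensorProduct.tensorTensorTensorComm k X X X X).toLinearMap ∘ₗ
      TensorProduct.map (TensorProduct.comm k X X).toLinearMap (LinearMap.id (M := X ⊗[k] X)) ∘ₗ
      (TensorProduct.assoc k (X ⊗[k] X) X X).toLinearMap ∘ₗ eG k X (rS k X) := by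
  ext x y
  simp only [LinearMap.coe_comp, Function.comp_apply, AlgebraTensorModule.curry_apply,
    curry_apply, LinearMap.coe_restrictScalars, eG_tmul, comulCT_tmul, LinearEquiv.coe_coe,
    comulCop, TensorProduct.comm_tmul]
  generalize Coalgebra.comul (R := k) y = t
  induction t using TensorProduct.induction_on with
  | zero => simp
  | add t1 t2 h1 h2 => simp only [tmul_add, add_tmul, map_add, h1, h2]
  | tmul c e =>
    simp only [assoc_symm_tmul, map_tmul, LinearMap.id_coe, id_eq, LinearMap.coe_comp,
      Function.comp_apply, rS_tmul, TensorProduct.comm_tmul, LinearEquiv.coe_coe]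
    generalize Coalgebra.comul (R := k) x = u
    induction u using TensorProduct.induction_on with
    | zero => simp
    | tmul a b => simp
    | add u1 u2 h1 h2 => simp only [tmul_add, add_tmul, map_add, h1, h2]

lemma deltaCE : TensorProduct.map (cE k X) (LinearMap.id (M := X)) ∘ₗ sw k X X X ∘ₗ rS k X =
    Coalgebra.comul (R := k) ∘ₗ cE k X := by
  ext x y
  simp only [LinearMap.coe_comp, Function.comp_apply, AlgebraTensorModule.curry_apply,
    curry_apply, LinearMap.coe_restrictScalars, rS_tmul, cE_tmul, map_smul]
  generalize Coalgebra.comul (R := k) x = u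
  induction u using TensorProduct.induction_on with
  | zero => simp
  | tmul a b => simp [TensorProduct.smul_tmul']
  | add u1 u2 h1 h2 => simp only [tmul_add, add_tmul, map_add, h1, h2, smul_add]

lemma NLx (q r : X ⊗[k] X →ₗ[k] X) :
    (TensorProduct.comm k X X).toLinearMap ∘ₗ TensorProduct.map q r ∘ₗ comulT k X =
      TensorProduct.map r q ∘ₗ comulTcc k X := by
  ext x y
  simp only [LinearMap.coe_comp, Function.comp_apply, AlgebraTensorModule.curry_apply,
    curry_apply, LinearMap.coe_restrictScalars, comulT_tmul, comulTcc_tmul, LinearEquiv.coe_coe,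
    comulCop, TensorProduct.comm_tmul]
  generalize Coalgebra.comul (R := k) y = t
  induction t using TensorProduct.induction_on with
  | zero => simp
  | add t1 t2 h1 h2 => simp only [tmul_add, add_tmul, map_add, h1, h2]
  | tmul c e =>
    simp only [assoc_symm_tmul, map_tmul, LinearMap.id_coe, id_eq, LinearMap.coe_comp,
      Function.comp_apply, rS_tmul, TensorProduct.comm_tmul, LinearEquiv.coe_coe]
    generalize Coalgebra.comul (R := k) x = u
    induction u using TensorProduct.induction_on with
    | zero => simp
    | tmul a b => simp
    | add u1 u2 h1 h2 => simp only [tmul_add, add_tmul, map_add, h1, h2]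

lemma mapττCop :
    TensorProduct.map (TensorProduct.comm k X X).toLinearMap
        (TensorProduct.comm k X X).toLinearMap ∘ₗ comulTCop k X =
      comulCT k X ∘ₗ (TensorProduct.comm k X X).toLinearMap := by
  ext x y
  simp only [LinearMap.coe_comp, Function.comp_apply, AlgebraTensorModule.curry_apply,
    curry_apply, LinearMap.coe_restrictScalars, comulTCop_tmul, comulCT_tmul, LinearEquiv.coe_coe,
    comulCop, TensorProduct.comm_tmul]
  generalize Coalgebra.comul (R := k) y = t
  induction t using TensorProduct.induction_on with
  | zero => simp
  | add t1 t2 h1 h2 => simp only [tmul_add, add_tmul, map_add, h1, h2]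
  | tmul c e =>
    simp only [assoc_symm_tmul, map_tmul, LinearMap.id_coe, id_eq, LinearMap.coe_comp,
      Function.comp_apply, rS_tmul, TensorProduct.comm_tmul, LinearEquiv.coe_coe]
    generalize Coalgebra.comul (R := k) x = u
    induction u using TensorProduct.induction_on with
    | zero => simp
    | tmul a b => simp
    | add u1 u2 h1 h2 => simp only [tmul_add, add_tmul, map_add, h1, h2]
/-! ### counit projection lemmas -/

lemma NL1 : TensorProduct.map (cE k X) (cE' k X) ∘ₗ comulT k X = LinearMap.id := by
  ext x y
  simp only [LinearMap.coe_comp, Function.comp_apply, AlgebraTensorModule.curry_apply,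
    curry_apply, LinearMap.coe_restrictScalars, comulT_tmul, LinearMap.id_coe, id_eq]
  have key : ∀ u v : X ⊗[k] X, TensorProduct.map (cE k X) (cE' k X)
      ((TensorProduct.tensorTensorTensorComm k X X X X) (u ⊗ₜ[k] v)) =
      ((TensorProduct.rid k X) ((LinearMap.lTensor X (Coalgebra.counit (R := k))) u)) ⊗ₜ[k]
        ((TensorProduct.lid k X) ((LinearMap.rTensor X (Coalgebra.counit (R := k))) v)) := by
    intro u v
    induction u using TensorProduct.induction_on with
    | zero => simp
    | add u1 u2 h1 h2 => simp only [add_tmul, map_add, h1, h2]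
    | tmul a b =>
      induction v using TensorProduct.induction_on with
      | zero => simp
      | tmul c d => simp [← TensorProduct.smul_tmul', tmul_smul, smul_smul, mul_comm]
      | add v1 v2 h1 h2 => simp only [tmul_add, map_add, h1, h2]
  rw [key, Coalgebra.lTensor_counit_comul, Coalgebra.rTensor_counit_comul]
  simp

lemma NL2 : TensorProduct.map (cE' k X) (cE k X) ∘ₗ comulT k X =
    (TensorProduct.comm k X X).toLinearMap := by
  ext x y
  simp only [LinearMap.coe_comp, Function.comp_apply, AlgebraTensorModule.curry_apply,
    curry_apply, LinearMap.coe_restrictScalars, comulT_tmul, LinearEquiv.coe_coe,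
    TensorProduct.comm_tmul]
  have key : ∀ u v : X ⊗[k] X, TensorProduct.map (cE' k X) (cE k X)
      ((TensorProduct.tensorTensorTensorComm k X X X X) (u ⊗ₜ[k] v)) =
      (TensorProduct.map (TensorProduct.lid k X).toLinearMap (TensorProduct.rid k X).toLinearMap)
        ((TensorProduct.tensorTensorTensorComm k k X X k)
          (((LinearMap.rTensor X (Coalgebra.counit (R := k))) u) ⊗ₜ[k]
           ((LinearMap.lTensor X (Coalgebra.counit (R := k))) v))) := by
    intro u v
    induction u using TensorProduct.induction_on with
    | zero => simp
    | add u1 u2 h1 h2 => simp only [add_tmul, map_add, h1, h2]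
    | tmul a b =>
      induction v using TensorProduct.induction_on with
      | zero => simp
      | tmul c d => simp [← TensorProduct.smul_tmul', tmul_smul, smul_smul, mul_comm]
      | add v1 v2 h1 h2 => simp only [tmul_add, map_add, h1, h2]
  rw [key, Coalgebra.lTensor_counit_comul, Coalgebra.rTensor_counit_comul]
  simp

lemma epseps (y : X) : (TensorProduct.lid k k)
    ((TensorProduct.map (Coalgebra.counit (R := k)) (Coalgebra.counit (R := k)))
      (Coalgebra.comul (R := k) y)) = Coalgebra.counit (R := k) y := by
  rw [← LinearMap.lTensor_comp_rTensor]
  simp only [LinearMap.coe_comp, Function.comp_apply, Coalgebra.rTensor_counit_comul,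
    LinearMap.lTensor_tmul, lid_tmul]
  simp

lemma NL4 : TensorProduct.map (cE k X) (cE k X) ∘ₗ comulT k X =
    Coalgebra.comul (R := k) ∘ₗ cE k X := by
  ext x y
  simp only [LinearMap.coe_comp, Function.comp_apply, AlgebraTensorModule.curry_apply,
    curry_apply, LinearMap.coe_restrictScalars, comulT_tmul, cE_tmul, map_smul]
  have key : ∀ u v : X ⊗[k] X, TensorProduct.map (cE k X) (cE k X)
      ((TensorProduct.tensorTensorTensorComm k X X X X) (u ⊗ₜ[k] v)) =
      ((TensorProduct.lid k k) ((TensorProduct.map (Coalgebra.counit (R := k))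
        (Coalgebra.counit (R := k))) v)) • u := by
    intro u v
    induction u using TensorProduct.induction_on with
    | zero => simp
    | add u1 u2 h1 h2 => simp only [add_tmul, map_add, h1, h2, smul_add]
    | tmul a b =>
      induction v using TensorProduct.induction_on with
      | zero => simp
      | tmul c d => simp only [tensorTensorTensorComm_tmul, map_tmul, cE_tmul, cE'_tmul, lid_tmul, smul_eq_mul, ← TensorProduct.smul_tmul', tmul_smul, smul_smul, mul_comm]
      | add v1 v2 h1 h2 => simp only [tmul_add, map_add, h1, h2, add_smul]
  rw [key, epseps]

lemma NL4' : TensorProduct.map (cE' k X) (cE' k X) ∘ₗ comulT k X =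
    Coalgebra.comul (R := k) ∘ₗ cE' k X := by
  ext x y
  simp only [LinearMap.coe_comp, Function.comp_apply, AlgebraTensorModule.curry_apply,
    curry_apply, LinearMap.coe_restrictScalars, comulT_tmul, cE'_tmul, map_smul]
  have key : ∀ u v : X ⊗[k] X, TensorProduct.map (cE' k X) (cE' k X)
      ((TensorProduct.tensorTensorTensorComm k X X X X) (u ⊗ₜ[k] v)) =
      ((TensorProduct.lid k k) ((TensorProduct.map (Coalgebra.counit (R := k))
        (Coalgebra.counit (R := k))) u)) • v := by
    intro u v
    induction u using TensorProduct.induction_on with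
    | zero => simp
    | add u1 u2 h1 h2 => simp only [add_tmul, map_add, h1, h2, add_smul]
    | tmul a b =>
      induction v using TensorProduct.induction_on with
      | zero => simp
      | tmul c d => simp only [tensorTensorTensorComm_tmul, map_tmul, cE_tmul, cE'_tmul, lid_tmul, smul_eq_mul, ← TensorProduct.smul_tmul', tmul_smul, smul_smul, mul_comm]
      | add v1 v2 h1 h2 => simp only [tmul_add, map_add, h1, h2, smul_add]
  rw [key, epseps]

lemma NL5 : Coalgebra.counit (R := k) ∘ₗ cE k X = counitT k X := by
  ext x y
  simp [counitT, mul_comm, smul_eq_mul]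

lemma NL5' : Coalgebra.counit (R := k) ∘ₗ cE' k X = counitT k X := by
  ext x y
  simp [counitT, smul_eq_mul]

lemma counitT_comm : counitT k X ∘ₗ (TensorProduct.comm k X X).toLinearMap = counitT k X := by
  ext x y
  simp [counitT, mul_comm, smul_eq_mul]
/-! ### more structural lemmas -/

lemma rS_eG {M : Type} [AddCommGroup M] [Module k M] (h : M ⊗[k] X →ₗ[k] X) :
    rS k X ∘ₗ eG k X h = eG k X (Coalgebra.comul (R := k) ∘ₗ h) :=
  rT_eG k X h (Coalgebra.comul (R := k))

lemma hA_comp (u w : X ⊗[k] X →ₗ[k] X) :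
    hA k X (u ∘ₗ eG k X w) = hA k X u ∘ₗ eG k X (hA k X w) := by
  ext a b y
  simp only [LinearMap.coe_comp, Function.comp_apply, AlgebraTensorModule.curry_apply,
    curry_apply, LinearMap.coe_restrictScalars, eG_tmul, hA_tmul]
  generalize Coalgebra.comul (R := k) y = t
  induction t using TensorProduct.induction_on with
  | zero => simp
  | tmul c e => simp
  | add t1 t2 h1 h2 => simp only [tmul_add, add_tmul, map_add, h1, h2]

lemma hB_comp (u w : X ⊗[k] X →ₗ[k] X) :
    hB k X (u ∘ₗ eG k X w) = hB k X u ∘ₗ eG k X (hB k X w) := by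
  ext a b y
  simp only [LinearMap.coe_comp, Function.comp_apply, AlgebraTensorModule.curry_apply,
    curry_apply, LinearMap.coe_restrictScalars, eG_tmul, hB_tmul]
  generalize Coalgebra.comul (R := k) y = t
  induction t using TensorProduct.induction_on with
  | zero => simp
  | tmul c e => simp
  | add t1 t2 h1 h2 => simp only [tmul_add, add_tmul, map_add, h1, h2]

lemma eG_hA_cE : eG k X (hA k X (cE k X)) = LinearMap.id := by
  have : hA k X (cE k X) = LinearMap.lTensor X (cE k X) ∘ₗ
      (TensorProduct.assoc k X X X).toLinearMap := rfl
  rw [this, eG_lT, eG_cE, LinearMap.lTensor_id]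
  ext x y z
  simp

lemma eG_hB_cE : eG k X (hB k X (cE k X)) = LinearMap.id := by
  have : hB k X (cE k X) = TensorProduct.map (cE k X) (LinearMap.id (M := X)) ∘ₗ
      sw k X X X := rfl
  rw [this, eG_sw, eG_cE, LinearMap.rTensor_id]
  ext x y z
  simp

lemma B9 (q r : X ⊗[k] X →ₗ[k] X) :
    TensorProduct.map q r ∘ₗ (TensorProduct.tensorTensorTensorComm k X X X X).toLinearMap ∘ₗ
      LinearMap.lTensor (X ⊗[k] X) (TensorProduct.comm k X X).toLinearMap ∘ₗ
      (TensorProduct.assoc k (X ⊗[k] X) X X).toLinearMap =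
    hB k X q ∘ₗ LinearMap.rTensor X (hA k X r) := by
  ext x y z w
  simp

lemma B9' (q r : X ⊗[k] X →ₗ[k] X) :
    TensorProduct.map q r ∘ₗ (TensorProduct.comm k (X ⊗[k] X) (X ⊗[k] X)).toLinearMap ∘ₗ
      (TensorProduct.tensorTensorTensorComm k X X X X).toLinearMap ∘ₗ
      LinearMap.lTensor (X ⊗[k] X) (TensorProduct.comm k X X).toLinearMap ∘ₗ
      (TensorProduct.assoc k (X ⊗[k] X) X X).toLinearMap =
    jC k X r ∘ₗ LinearMap.rTensor X (hA k X q) := by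
  ext x y z w
  simp

lemma B10 (u v : X ⊗[k] X →ₗ[k] X) :
    TensorProduct.map u v ∘ₗ (TensorProduct.tensorTensorTensorComm k X X X X).toLinearMap ∘ₗ
      TensorProduct.map (TensorProduct.comm k X X).toLinearMap (LinearMap.id (M := X ⊗[k] X)) ∘ₗ
      (TensorProduct.assoc k (X ⊗[k] X) X X).toLinearMap =
    TensorProduct.map (LinearMap.id (M := X)) v ∘ₗ (TensorProduct.assoc k X X X).toLinearMap ∘ₗ
      TensorProduct.map (TensorProduct.comm k X X).toLinearMap (LinearMap.id (M := X)) ∘ₗ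
      LinearMap.rTensor X (hA k X u) := by
  ext x y z w
  simp

lemma B11 : (TensorProduct.assoc k X X X).toLinearMap ∘ₗ
      TensorProduct.map (TensorProduct.comm k X X).toLinearMap (LinearMap.id (M := X)) ∘ₗ
      sw k X X X = (TensorProduct.comm k (X ⊗[k] X) X).toLinearMap := by
  ext x y z
  simp

lemma B12 (u : X ⊗[k] X →ₗ[k] X) :
    TensorProduct.map (LinearMap.id (M := X)) u ∘ₗ
        (TensorProduct.comm k (X ⊗[k] X) X).toLinearMap =
      (TensorProduct.comm k X X).toLinearMap ∘ₗ TensorProduct.map u (LinearMap.id (M := X)) := by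
  ext x y z
  simp
/-! ### consequences of the hypotheses -/

lemma Gmap_eG (f : X ⊗[k] X →ₗ[k] X) : Gmap k X f = eG k X f := rfl

section main
variable (s : X ⊗[k] X →ₗ[k] X ⊗[k] X) (p : X ⊗[k] X →ₗ[k] X)

lemma invA (hp : IsDotOf k X s p) :
    eG k X p ∘ₗ eG k X (comp2 k X s) = LinearMap.id := by
  rw [eG_eG]
  have h2 : p ∘ₗ eG k X (comp2 k X s) = cE k X := hp.2
  rw [h2, eG_cE]

lemma invB (hp : IsDotOf k X s p) :
    eG k X (comp2 k X s) ∘ₗ eG k X p = LinearMap.id := by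
  rw [eG_eG]
  have h1 : comp2 k X s ∘ₗ eG k X p = cE k X := hp.1
  rw [h1, eG_cE]

lemma fMor (hs : IsCoalgEndo k X s) :
    Coalgebra.comul (R := k) ∘ₗ comp1 k X s =
      TensorProduct.map (comp1 k X s) (comp1 k X s) ∘ₗ comulT k X := by
  have e := congrArg (fun m => m ∘ₗ s) (NL4 k X)
  simp only [LinearMap.comp_assoc] at e
  rw [hs.1] at e
  have goal : Coalgebra.comul (R := k) ∘ₗ (cE k X ∘ₗ s) =
      TensorProduct.map (cE k X ∘ₗ s) (cE k X ∘ₗ s) ∘ₗ comulT k X := by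
    rw [← e, ← LinearMap.comp_assoc, ← TensorProduct.map_comp]
  exact goal

lemma gMor (hs : IsCoalgEndo k X s) :
    Coalgebra.comul (R := k) ∘ₗ comp2 k X s =
      TensorProduct.map (comp2 k X s) (comp2 k X s) ∘ₗ comulT k X := by
  have e := congrArg (fun m => m ∘ₗ s) (NL4' k X)
  simp only [LinearMap.comp_assoc] at e
  rw [hs.1] at e
  have goal : Coalgebra.comul (R := k) ∘ₗ (cE' k X ∘ₗ s) =
      TensorProduct.map (cE' k X ∘ₗ s) (cE' k X ∘ₗ s) ∘ₗ comulT k X := by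
    rw [← e, ← LinearMap.comp_assoc, ← TensorProduct.map_comp]
  exact goal

lemma fCounit (hs : IsCoalgEndo k X s) :
    Coalgebra.counit (R := k) ∘ₗ comp1 k X s = counitT k X := by
  have e := congrArg (fun m => m ∘ₗ s) (NL5 k X)
  simp only [LinearMap.comp_assoc] at e
  rw [hs.2] at e
  exact e

lemma gCounit (hs : IsCoalgEndo k X s) :
    Coalgebra.counit (R := k) ∘ₗ comp2 k X s = counitT k X := by
  have e := congrArg (fun m => m ∘ₗ s) (NL5' k X)
  simp only [LinearMap.comp_assoc] at e
  rw [hs.2] at e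
  exact e

lemma sEq (hs : IsCoalgEndo k X s) :
    s = TensorProduct.map (comp1 k X s) (comp2 k X s) ∘ₗ comulT k X := by
  have e := congrArg (fun m => m ∘ₗ s) (NL1 k X)
  simp only [LinearMap.comp_assoc, LinearMap.id_comp] at e
  rw [hs.1] at e
  calc s = TensorProduct.map (cE k X) (cE' k X) ∘ₗ
        TensorProduct.map s s ∘ₗ comulT k X := e.symm
    _ = TensorProduct.map (comp1 k X s) (comp2 k X s) ∘ₗ comulT k X := by
        rw [← LinearMap.comp_assoc, ← TensorProduct.map_comp]
        rfl

lemma sSwap (hs : IsCoalgEndo k X s) :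
    (TensorProduct.comm k X X).toLinearMap ∘ₗ s =
      TensorProduct.map (comp2 k X s) (comp1 k X s) ∘ₗ comulT k X := by
  have e := congrArg (fun m => m ∘ₗ s) (NL2 k X)
  simp only [LinearMap.comp_assoc] at e
  rw [hs.1] at e
  calc (TensorProduct.comm k X X).toLinearMap ∘ₗ s
      = TensorProduct.map (cE' k X) (cE k X) ∘ₗ TensorProduct.map s s ∘ₗ comulT k X := e.symm
    _ = TensorProduct.map (comp2 k X s) (comp1 k X s) ∘ₗ comulT k X := by
        rw [← LinearMap.comp_assoc, ← TensorProduct.map_comp]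
        rfl

lemma SWAP (hs : IsCoalgEndo k X s) :
    TensorProduct.map (comp2 k X s) (comp1 k X s) ∘ₗ comulT k X =
      TensorProduct.map (comp2 k X s) (comp1 k X s) ∘ₗ comulTcc k X := by
  have h1 := NLx k X (comp1 k X s) (comp2 k X s)
  -- comm ∘ map f g ∘ comulT = map g f ∘ comulTcc
  have h2 : TensorProduct.map (comp1 k X s) (comp2 k X s) ∘ₗ comulT k X = s := (sEq k X s hs).symm
  rw [h2] at h1
  rw [← h1, ← sSwap k X s hs]

lemma dgSer (hs : IsCoalgEndo k X s) :
    Coalgebra.comul (R := k) ∘ₗ comp2 k X s =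
      hA k X (comp2 k X s) ∘ₗ eG k X (hB k X (comp2 k X s) ∘ₗ rS k X) := by
  rw [gMor k X s hs, ← serial1]

end main
section main2
variable (s : X ⊗[k] X →ₗ[k] X ⊗[k] X) (p : X ⊗[k] X →ₗ[k] X)

lemma eG_comp_rS (q : (X ⊗[k] X) ⊗[k] X →ₗ[k] X ⊗[k] X) :
    eG k X (q ∘ₗ rS k X) = eG k X q ∘ₗ rS k X :=
  (eG_rT k X q (Coalgebra.comul (R := k))).symm

lemma claim3aux (hs : IsCoalgEndo k X s) (hp : IsDotOf k X s p) :
    TensorProduct.map p p ∘ₗ comulTCop k X ∘ₗ eG k X (comp2 k X s) =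
      Coalgebra.comul (R := k) ∘ₗ cE k X := by
  have hpc : p ∘ₗ eG k X (comp2 k X s) = cE k X := hp.2
  rw [comulTCop_serial]
  simp only [LinearMap.comp_assoc]
  rw [eG_eG, rS_eG, dgSer k X s hs, ← eG_eG]
  have P := B9 k X p p
  simp only [← LinearMap.comp_assoc] at P ⊢
  rw [P]
  simp only [LinearMap.comp_assoc]
  rw [rT_eG]
  simp only [← LinearMap.comp_assoc]
  rw [← hA_comp, hpc]
  rw [show hA k X (cE k X) ∘ₗ eG k X (hB k X (comp2 k X s) ∘ₗ rS k X) =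
      hA k X (cE k X) ∘ₗ eG k X (hB k X (comp2 k X s) ∘ₗ rS k X) from rfl]
  rw [← eG_eG, eG_hA_cE, LinearMap.id_comp]
  rw [eG_comp_rS, ← LinearMap.comp_assoc, ← hB_comp, hpc]
  have : hB k X (cE k X) = TensorProduct.map (cE k X) (LinearMap.id (M := X)) ∘ₗ sw k X X X :=
    rfl
  rw [this, LinearMap.comp_assoc, deltaCE]

lemma claim3 (hs : IsCoalgEndo k X s) (hp : IsDotOf k X s p) :
    Coalgebra.comul (R := k) ∘ₗ p = TensorProduct.map p p ∘ₗ comulTCop k X := by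
  have e := congrArg (fun m => m ∘ₗ eG k X p) (claim3aux k X s p hs hp)
  simp only [LinearMap.comp_assoc] at e
  rw [invB k X s p hp, LinearMap.comp_id, cE_eG] at e
  exact e.symm

lemma counitT_eGg (hs : IsCoalgEndo k X s) :
    counitT k X ∘ₗ eG k X (comp2 k X s) = counitT k X := by
  have e : counitT k X ∘ₗ eG k X (comp2 k X s) =
      (Coalgebra.counit (R := k) ∘ₗ cE k X) ∘ₗ eG k X (comp2 k X s) := by rw [NL5]
  rw [e, LinearMap.comp_assoc, cE_eG, gCounit k X s hs]

lemma counitT_eGp (hs : IsCoalgEndo k X s) (hp : IsDotOf k X s p) :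
    counitT k X ∘ₗ eG k X p = counitT k X := by
  conv_lhs => rw [← counitT_eGg k X s hs]
  rw [LinearMap.comp_assoc, invB k X s p hp, LinearMap.comp_id]

lemma counitP (hs : IsCoalgEndo k X s) (hp : IsDotOf k X s p) :
    Coalgebra.counit (R := k) ∘ₗ p = counitT k X := by
  have : Coalgebra.counit (R := k) ∘ₗ p =
      (Coalgebra.counit (R := k) ∘ₗ cE k X) ∘ₗ eG k X p := by
    rw [LinearMap.comp_assoc, cE_eG]
  rw [this, NL5, counitT_eGp k X s p hs hp]

end main2
section main3
variable (s : X ⊗[k] X →ₗ[k] X ⊗[k] X) (p : X ⊗[k] X →ₗ[k] X)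

lemma collapseA (hp : IsDotOf k X s p) :
    eG k X (hA k X p) ∘ₗ eG k X (hA k X (comp2 k X s)) = LinearMap.id := by
  have hpc : p ∘ₗ eG k X (comp2 k X s) = cE k X := hp.2
  rw [eG_eG, ← hA_comp, hpc, eG_hA_cE]

lemma collapseA_t {W : Type} [AddCommGroup W] [Module k W]
    (hp : IsDotOf k X s p) (Z : W →ₗ[k] (X ⊗[k] X) ⊗[k] X) :
    eG k X (hA k X p) ∘ₗ (eG k X (hA k X (comp2 k X s)) ∘ₗ Z) = Z := by
  rw [← LinearMap.comp_assoc, collapseA k X s p hp, LinearMap.id_comp]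

lemma hAcomp_t {W : Type} [AddCommGroup W] [Module k W]
    (u w : X ⊗[k] X →ₗ[k] X) (Z : W →ₗ[k] (X ⊗[k] X) ⊗[k] X) :
    hA k X u ∘ₗ (eG k X (hA k X w) ∘ₗ Z) = hA k X (u ∘ₗ eG k X w) ∘ₗ Z := by
  rw [← LinearMap.comp_assoc, ← hA_comp]

lemma hBcomp_t {W : Type} [AddCommGroup W] [Module k W]
    (u w : X ⊗[k] X →ₗ[k] X) (Z : W →ₗ[k] (X ⊗[k] X) ⊗[k] X) :
    hB k X u ∘ₗ (eG k X (hB k X w) ∘ₗ Z) = hB k X (u ∘ₗ eG k X w) ∘ₗ Z := by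
  rw [← LinearMap.comp_assoc, ← hB_comp]

lemma eG_hB (q : X ⊗[k] X →ₗ[k] X) :
    eG k X (hB k X q) = sw k X X X ∘ₗ LinearMap.rTensor X (eG k X q) ∘ₗ sw k X X X :=
  eG_sw k X q

lemma B11_t {W : Type} [AddCommGroup W] [Module k W] (Z : W →ₗ[k] (X ⊗[k] X) ⊗[k] X) :
    (TensorProduct.assoc k X X X).toLinearMap ∘ₗ
      (TensorProduct.map (TensorProduct.comm k X X).toLinearMap (LinearMap.id (M := X)) ∘ₗ
        (sw k X X X ∘ₗ Z)) = (TensorProduct.comm k (X ⊗[k] X) X).toLinearMap ∘ₗ Z := by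
  have b := B11 k X
  simp only [← LinearMap.comp_assoc] at b ⊢
  rw [b]

lemma B12_t {W : Type} [AddCommGroup W] [Module k W] (u : X ⊗[k] X →ₗ[k] X)
    (Z : W →ₗ[k] (X ⊗[k] X) ⊗[k] X) :
    TensorProduct.map (LinearMap.id (M := X)) u ∘ₗ
      ((TensorProduct.comm k (X ⊗[k] X) X).toLinearMap ∘ₗ Z) =
    (TensorProduct.comm k X X).toLinearMap ∘ₗ
      (TensorProduct.map u (LinearMap.id (M := X)) ∘ₗ Z) := by
  have b := B12 k X u
  simp only [← LinearMap.comp_assoc] at b ⊢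
  rw [b]

lemma mapfold_t {W : Type} [AddCommGroup W] [Module k W]
    (u : X ⊗[k] X →ₗ[k] X) (v : X ⊗[k] X →ₗ[k] X ⊗[k] X) (Z : W →ₗ[k] (X ⊗[k] X) ⊗[k] X) :
    TensorProduct.map u (LinearMap.id (M := X)) ∘ₗ (LinearMap.rTensor X v ∘ₗ Z) =
      TensorProduct.map (u ∘ₗ v) (LinearMap.id (M := X)) ∘ₗ Z := by
  rw [← LinearMap.comp_assoc]
  congr 1
  ext a b c
  simp

lemma comm_comm_t {W : Type} [AddCommGroup W] [Module k W] (Z : W →ₗ[k] X ⊗[k] X) :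
    (TensorProduct.comm k X X).toLinearMap ∘ₗ ((TensorProduct.comm k X X).toLinearMap ∘ₗ Z) =
      Z := by
  rw [← LinearMap.comp_assoc, _root_.comm_comm, LinearMap.id_comp]

lemma DtG (hp : IsDotOf k X s p) :
    (comp1 k X s ∘ₗ eG k X p) ∘ₗ eG k X (comp2 k X s) = comp1 k X s := by
  rw [LinearMap.comp_assoc, invA k X s p hp, LinearMap.comp_id]

lemma claim2aux (hs : IsCoalgEndo k X s) (hp : IsDotOf k X s p) :
    TensorProduct.map (comp1 k X s ∘ₗ eG k X p) (comp1 k X s ∘ₗ eG k X p) ∘ₗ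
        comulCT k X ∘ₗ eG k X (comp2 k X s) =
      Coalgebra.comul (R := k) ∘ₗ comp1 k X s := by
  have hpc : p ∘ₗ eG k X (comp2 k X s) = cE k X := hp.2
  rw [comulCT_serial]
  simp only [LinearMap.comp_assoc]
  rw [eG_eG, rS_eG, dgSer k X s hs, ← eG_eG]
  have P := B10 k X (comp1 k X s ∘ₗ eG k X p) (comp1 k X s ∘ₗ eG k X p)
  simp only [← LinearMap.comp_assoc] at P ⊢
  rw [P]
  simp only [LinearMap.comp_assoc]
  rw [rT_eG, hA_comp]
  simp only [LinearMap.comp_assoc]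
  rw [collapseA_t k X s p hp, serial1, SWAP k X s hs, ← serial2, ← eG_eG, eG_hB]
  simp only [LinearMap.comp_assoc]
  rw [B11_t, B12_t, mapfold_t, DtG k X s p hp]
  rw [show TensorProduct.map (comp1 k X s) (LinearMap.id (M := X)) ∘ₗ
      (sw k X X X ∘ₗ eG k X (jC k X (comp1 k X s) ∘ₗ rS k X)) =
      hB k X (comp1 k X s) ∘ₗ eG k X (jC k X (comp1 k X s) ∘ₗ rS k X) from by
    rw [← LinearMap.comp_assoc]; rfl]
  rw [serial3, ← fMor k X s hs]

lemma claim2core (hs : IsCoalgEndo k X s) (hp : IsDotOf k X s p) :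
    Coalgebra.comul (R := k) ∘ₗ (comp1 k X s ∘ₗ eG k X p) =
      TensorProduct.map (comp1 k X s ∘ₗ eG k X p) (comp1 k X s ∘ₗ eG k X p) ∘ₗ
        comulCT k X := by
  have e := congrArg (fun m => m ∘ₗ eG k X p) (claim2aux k X s p hs hp)
  simp only [LinearMap.comp_assoc] at e
  rw [invB k X s p hp, LinearMap.comp_id] at e
  exact e.symm

lemma dOf_eq : dOf k X s p =
    (comp1 k X s ∘ₗ eG k X p) ∘ₗ (TensorProduct.comm k X X).toLinearMap := by
  simp only [dOf, Gmap_eG, LinearMap.comp_assoc]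

lemma claim2final (hs : IsCoalgEndo k X s) (hp : IsDotOf k X s p) :
    Coalgebra.comul (R := k) ∘ₗ dOf k X s p =
      TensorProduct.map (dOf k X s p) (dOf k X s p) ∘ₗ comulTCop k X := by
  rw [dOf_eq, ← LinearMap.comp_assoc, claim2core k X s p hs hp, LinearMap.comp_assoc,
    ← mapττCop, ← LinearMap.comp_assoc, ← TensorProduct.map_comp]

lemma counitD (hs : IsCoalgEndo k X s) (hp : IsDotOf k X s p) :
    Coalgebra.counit (R := k) ∘ₗ dOf k X s p = counitT k X := by
  rw [dOf_eq]
  simp only [← LinearMap.comp_assoc]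
  rw [fCounit k X s hs, counitT_eGp k X s p hs hp, counitT_comm]

end main3
section main4
variable (s : X ⊗[k] X →ₗ[k] X ⊗[k] X) (p : X ⊗[k] X →ₗ[k] X)

lemma exR (hs : IsCoalgEndo k X s) (hp : IsDotOf k X s p) :
    TensorProduct.map (comp1 k X s ∘ₗ eG k X p) p ∘ₗ comulTCop k X ∘ₗ
        eG k X (comp2 k X s) = hB k X (comp1 k X s) ∘ₗ rS k X := by
  have hpc : p ∘ₗ eG k X (comp2 k X s) = cE k X := hp.2
  rw [comulTCop_serial]
  simp only [LinearMap.comp_assoc]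
  rw [eG_eG, rS_eG, dgSer k X s hs, ← eG_eG]
  have P := B9 k X (comp1 k X s ∘ₗ eG k X p) p
  simp only [← LinearMap.comp_assoc] at P ⊢
  rw [P]
  simp only [LinearMap.comp_assoc]
  rw [rT_eG]
  rw [hAcomp_t, hpc]
  rw [← eG_eG, eG_hA_cE, LinearMap.id_comp]
  rw [eG_comp_rS, ← LinearMap.comp_assoc, ← hB_comp, DtG k X s p hp]

lemma exL (hs : IsCoalgEndo k X s) (hp : IsDotOf k X s p) :
    TensorProduct.map (comp1 k X s ∘ₗ eG k X p) p ∘ₗ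
        (TensorProduct.comm k (X ⊗[k] X) (X ⊗[k] X)).toLinearMap ∘ₗ comulTCop k X ∘ₗ
        eG k X (comp2 k X s) = hB k X (comp1 k X s) ∘ₗ rS k X := by
  have hpc : p ∘ₗ eG k X (comp2 k X s) = cE k X := hp.2
  rw [comulTCop_serial]
  simp only [LinearMap.comp_assoc]
  rw [eG_eG, rS_eG, dgSer k X s hs, ← eG_eG]
  have P := B9' k X (comp1 k X s ∘ₗ eG k X p) p
  simp only [← LinearMap.comp_assoc] at P ⊢
  rw [P]
  simp only [LinearMap.comp_assoc]
  rw [rT_eG, hA_comp]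
  simp only [LinearMap.comp_assoc]
  rw [collapseA_t k X s p hp, serial1, SWAP k X s hs, ← serial2, ← eG_eG]
  rw [show jC k X p = (TensorProduct.comm k X X).toLinearMap ∘ₗ hB k X p from rfl]
  simp only [LinearMap.comp_assoc]
  rw [hBcomp_t, hpc]
  rw [show hB k X (cE k X) = TensorProduct.map (cE k X) (LinearMap.id (M := X)) ∘ₗ
      sw k X X X from rfl]
  simp only [LinearMap.comp_assoc]
  rw [tail_eG]
  rw [show jC k X (comp1 k X s) = (TensorProduct.comm k X X).toLinearMap ∘ₗ
      hB k X (comp1 k X s) from rfl]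
  simp only [LinearMap.comp_assoc]
  rw [comm_comm_t]

lemma exCore (hs : IsCoalgEndo k X s) (hp : IsDotOf k X s p) :
    TensorProduct.map (comp1 k X s ∘ₗ eG k X p) p ∘ₗ
        (TensorProduct.comm k (X ⊗[k] X) (X ⊗[k] X)).toLinearMap ∘ₗ comulTCop k X =
      TensorProduct.map (comp1 k X s ∘ₗ eG k X p) p ∘ₗ comulTCop k X := by
  have e := (exL k X s p hs hp).trans (exR k X s p hs hp).symm
  have e2 := congrArg (fun m => m ∘ₗ eG k X p) e
  simp only [LinearMap.comp_assoc] at e2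
  rw [invB k X s p hp, LinearMap.comp_id] at e2
  exact e2

end main4
section final
variable (s : X ⊗[k] X →ₗ[k] X ⊗[k] X) (p : X ⊗[k] X →ₗ[k] X)

lemma dOf_tmul (a b : X) : dOf k X s p (a ⊗ₜ[k] b) =
    (comp1 k X s ∘ₗ eG k X p) (b ⊗ₜ[k] a) := by
  rw [dOf_eq]
  simp

lemma exchange_final (hs : IsCoalgEndo k X s) (hp : IsDotOf k X s p) :
    ExchangeId k X p (dOf k X s p) := by
  intro x y n m x1 x2 y1 y2 hx hy
  have c1 : comulTCop k X (x ⊗ₜ[k] y) =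
      ∑ i, ∑ j, (x1 i ⊗ₜ[k] y2 j) ⊗ₜ[k] (x2 i ⊗ₜ[k] y1 j) := by
    rw [comulTCop_tmul]
    rw [show comulCop k X y = (TensorProduct.comm k X X) (Coalgebra.comul (R := k) y) from rfl]
    rw [← hx, ← hy]
    simp [map_sum, sum_tmul, tmul_sum]
    rw [Finset.sum_comm]
  have key := LinearMap.congr_fun (exCore k X s p hs hp) (x ⊗ₜ[k] y)
  simp only [LinearMap.coe_comp, Function.comp_apply, LinearEquiv.coe_coe] at key
  rw [c1] at key
  simp only [map_sum, TensorProduct.comm_tmul, map_tmul] at key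
  calc (∑ i, ∑ j, dOf k X s p (y1 j ⊗ₜ[k] x2 i) ⊗ₜ[k] p (x1 i ⊗ₜ[k] y2 j))
      = ∑ i, ∑ j, (comp1 k X s ∘ₗ eG k X p) (x2 i ⊗ₜ[k] y1 j) ⊗ₜ[k] p (x1 i ⊗ₜ[k] y2 j) := by
        simp only [dOf_tmul]
    _ = ∑ i, ∑ j, (comp1 k X s ∘ₗ eG k X p) (x1 i ⊗ₜ[k] y2 j) ⊗ₜ[k] p (x2 i ⊗ₜ[k] y1 j) :=
        key
    _ = ∑ i, ∑ j, dOf k X s p (y2 j ⊗ₜ[k] x1 i) ⊗ₜ[k] p (x2 i ⊗ₜ[k] y1 j) := by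
        simp only [dOf_tmul]

end final

/-- `(X; ·, ⊥)` is a left regular q-magma coalgebra. -/
theorem stmt_3 (s : X ⊗[k] X →ₗ[k] X ⊗[k] X) (hs : IsCoalgEndo k X s)
    (hnd : LeftNonDeg k X s) (p : X ⊗[k] X →ₗ[k] X) (hp : IsDotOf k X s p) :
    IsCoalgMorCop k X p ∧ IsCoalgMorCop k X (dOf k X s p) ∧
      ExchangeId k X p (dOf k X s p) ∧ Function.Bijective (Gmap k X p) := by
  refine ⟨⟨claim3 k X s p hs hp, counitP k X s p hs hp⟩,
    ⟨claim2final k X s p hs hp, counitD k X s p hs hp⟩,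
    exchange_final k X s p hs hp, ?_⟩
  rw [Gmap_eG]
  refine Function.bijective_iff_has_inverse.mpr ⟨eG k X (comp2 k X s), ?_, ?_⟩
  · intro a
    have := LinearMap.congr_fun (invB k X s p hp) a
    simpa using this
  · intro a
    have := LinearMap.congr_fun (invA k X s p hp) a
    simpa using this

end
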